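/- Let f ∈ ℂ[X₀,X₁] be homogeneous of degree d ≥ 4 and squarefree. Then the multiplication pairing R_f^d × R_f^{d−4} → R_f^{2d−4} is a perfect pairing; concretely: (a) for every u ∈ S^d with u ∉ J_f there exists v ∈ S^{d−4} with u·v ∉ J_f, and (b) for every nonzero v ∈ S^{d−4} there exists u ∈ S^d with u·v ∉ J_f. (Note that S^{d−4} ∩ J_f = 0, since J_f is generated in degree d−1.) -/

import Mathlib

open MvPolynomial

/-- The Jacobian ideal of a binary form `f ∈ ℂ[X₀,X₁]`: the ideal generated by the two
partial derivatives of `f`. -/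
noncomputable def jacIdeal (f : MvPolynomial (Fin 2) ℂ) : Ideal (MvPolynomial (Fin 2) ℂ) :=
  Ideal.span {pderiv 0 f, pderiv 1 f}

open MvPolynomial Finset

namespace Stmt7Aux

variable {σ : Type*}

lemma hc_homog {p : MvPolynomial σ ℂ} {j : ℕ} (hp : p.IsHomogeneous j) (k : ℕ) :
    homogeneousComponent k p = if k = j then p else 0 :=
  homogeneousComponent_of_mem hp

lemma hc_mul {q : MvPolynomial σ ℂ} {e : ℕ} (hq : q.IsHomogeneous e)
    (s : MvPolynomial σ ℂ) (m : ℕ) :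
    homogeneousComponent (m + e) (q * s) = q * homogeneousComponent m s := by
  have hs : q * s = ∑ i ∈ range (s.totalDegree + 1), q * homogeneousComponent i s := by
    rw [← Finset.mul_sum, sum_homogeneousComponent]
  rw [hs, map_sum]
  have hterm : ∀ i ∈ range (s.totalDegree + 1),
      homogeneousComponent (m + e) (q * homogeneousComponent i s)
      = if i = m then q * homogeneousComponent i s else 0 := by
    intro i _
    rw [hc_homog (hq.mul (homogeneousComponent_isHomogeneous i s)) (m + e)]
    by_cases h : i = m <;> simp [h] <;> omega
  rw [Finset.sum_congr rfl hterm, Finset.sum_ite_eq' (range (s.totalDegree + 1)) m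
    (fun i => q * homogeneousComponent i s)]
  by_cases hm : m ∈ range (s.totalDegree + 1)
  · rw [if_pos hm]
  · rw [if_neg hm, homogeneousComponent_eq_zero, mul_zero]
    simpa using hm

lemma hc_mul_small {q : MvPolynomial σ ℂ} {e : ℕ} (hq : q.IsHomogeneous e)
    (s : MvPolynomial σ ℂ) {k : ℕ} (hk : k < e) :
    homogeneousComponent k (q * s) = 0 := by
  have hs : q * s = ∑ i ∈ range (s.totalDegree + 1), q * homogeneousComponent i s := by
    rw [← Finset.mul_sum, sum_homogeneousComponent]
  rw [hs, map_sum, Finset.sum_eq_zero]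
  intro i _
  rw [hc_homog (hq.mul (homogeneousComponent_isHomogeneous i s)) k, if_neg (by omega)]

lemma hc_mul' {q : MvPolynomial σ ℂ} {e : ℕ} (hq : q.IsHomogeneous e)
    (s : MvPolynomial σ ℂ) {k : ℕ} (hk : e ≤ k) :
    homogeneousComponent k (q * s) = q * homogeneousComponent (k - e) s := by
  obtain ⟨m, rfl⟩ : ∃ m, k = m + e := ⟨k - e, by omega⟩
  rw [hc_mul hq, Nat.add_sub_cancel]

lemma exists_hc_ne_zero {p : MvPolynomial σ ℂ} (hp : p ≠ 0) :
    ∃ i, homogeneousComponent i p ≠ 0 := by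
  by_contra h
  push_neg at h
  apply hp
  conv_lhs => rw [← sum_homogeneousComponent p]
  exact Finset.sum_eq_zero fun i _ => h i

lemma hc_totalDegree {p : MvPolynomial σ ℂ} (hp : p ≠ 0) :
    homogeneousComponent p.totalDegree p ≠ 0 := by
  obtain ⟨m, hm, hdeg⟩ := p.support.exists_mem_eq_sup
    (MvPolynomial.support_nonempty.mpr hp) (fun m : σ →₀ ℕ => m.degree)
  have hdm : m.degree = p.totalDegree := by
    rw [totalDegree]
    exact hdeg.symm
  intro h0
  have : coeff m (homogeneousComponent p.totalDegree p) = coeff m p := by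
    rw [coeff_homogeneousComponent, if_pos hdm]
  rw [h0] at this
  exact MvPolynomial.mem_support_iff.mp hm this.symm

lemma le_totalDegree_of_hc_ne_zero {p : MvPolynomial σ ℂ} {i : ℕ}
    (h : homogeneousComponent i p ≠ 0) : i ≤ p.totalDegree := by
  by_contra hc
  exact h (homogeneousComponent_eq_zero i p (by omega))

lemma hc_prod_single {p : MvPolynomial σ ℂ} (q : MvPolynomial σ ℂ) {a : ℕ} (b : ℕ)
    (hpa : a ≤ p.totalDegree)
    (hzero : ∀ i ∈ range (p.totalDegree + 1), i ≠ a →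
      homogeneousComponent (a + b) (homogeneousComponent i p * q) = 0) :
    homogeneousComponent (a + b) (p * q)
      = homogeneousComponent a p * homogeneousComponent b q := by
  have hs : p * q = ∑ i ∈ range (p.totalDegree + 1), homogeneousComponent i p * q := by
    rw [← Finset.sum_mul, sum_homogeneousComponent]
  rw [hs, map_sum, Finset.sum_eq_single_of_mem a (by simp; omega) hzero,
    hc_mul' (homogeneousComponent_isHomogeneous a p) q (by omega), Nat.add_sub_cancel_left]

lemma homog_factor {p q : MvPolynomial σ ℂ} {n : ℕ}
    (h : (p * q).IsHomogeneous n) (hpq : p * q ≠ 0) :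
    ∃ a b : ℕ, a + b = n ∧ p.IsHomogeneous a ∧ q.IsHomogeneous b := by
  classical
  have hp : p ≠ 0 := fun h0 => hpq (by rw [h0, zero_mul])
  have hq : q ≠ 0 := fun h0 => hpq (by rw [h0, mul_zero])
  have hexp := exists_hc_ne_zero hp
  have hexq := exists_hc_ne_zero hq
  set a := Nat.find hexp with ha_def
  set b := Nat.find hexq with hb_def
  have ha : homogeneousComponent a p ≠ 0 := Nat.find_spec hexp
  have hb : homogeneousComponent b q ≠ 0 := Nat.find_spec hexq
  have hamin : ∀ i, i < a → homogeneousComponent i p = 0 :=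
    fun i hi => not_not.mp (Nat.find_min hexp hi)
  have hbmin : ∀ i, i < b → homogeneousComponent i q = 0 :=
    fun i hi => not_not.mp (Nat.find_min hexq hi)
  have haA : a ≤ p.totalDegree := le_totalDegree_of_hc_ne_zero ha
  have hbB : b ≤ q.totalDegree := le_totalDegree_of_hc_ne_zero hb
  -- bottom components
  have hbot : homogeneousComponent (a + b) (p * q)
      = homogeneousComponent a p * homogeneousComponent b q := by
    apply hc_prod_single q b haA
    intro i _ hia
    rcases lt_or_gt_of_ne hia with hlt | hgt
    · rw [hamin i hlt, zero_mul, map_zero]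
    · rcases le_or_gt i (a + b) with hle | hlt2
      · rw [hc_mul' (homogeneousComponent_isHomogeneous i p) q hle,
          hbmin (a + b - i) (by omega), mul_zero]
      · exact hc_mul_small (homogeneousComponent_isHomogeneous i p) q hlt2
  -- top components
  have htop : homogeneousComponent (p.totalDegree + q.totalDegree) (p * q)
      = homogeneousComponent p.totalDegree p * homogeneousComponent q.totalDegree q := by
    apply hc_prod_single q q.totalDegree (le_refl _)
    intro i hi hia
    have hi' : i < p.totalDegree := by
      simp only [Finset.mem_range] at hi
      omega
    rw [hc_mul' (homogeneousComponent_isHomogeneous i p) q (by omega),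
      homogeneousComponent_eq_zero _ q (by omega), mul_zero]
  have hbotne : homogeneousComponent (a + b) (p * q) ≠ 0 := by
    rw [hbot]; exact mul_ne_zero ha hb
  have htopne : homogeneousComponent (p.totalDegree + q.totalDegree) (p * q) ≠ 0 := by
    rw [htop]; exact mul_ne_zero (hc_totalDegree hp) (hc_totalDegree hq)
  have habn : a + b = n := by
    by_contra hne
    rw [hc_homog h (a + b), if_neg hne] at hbotne
    exact hbotne rfl
  have hABn : p.totalDegree + q.totalDegree = n := by
    by_contra hne
    rw [hc_homog h _, if_neg hne] at htopne
    exact htopne rfl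
  have haA' : a = p.totalDegree := by omega
  have hbB' : b = q.totalDegree := by omega
  have hphom : p = homogeneousComponent a p := by
    conv_lhs => rw [← sum_homogeneousComponent p]
    apply Finset.sum_eq_single_of_mem a (by simp; omega)
    intro i hi hia
    apply hamin
    simp only [Finset.mem_range] at hi
    omega
  have hqhom : q = homogeneousComponent b q := by
    conv_lhs => rw [← sum_homogeneousComponent q]
    apply Finset.sum_eq_single_of_mem b (by simp; omega)
    intro i hi hia
    apply hbmin
    simp only [Finset.mem_range] at hi
    omega
  exact ⟨a, b, habn, hphom ▸ homogeneousComponent_isHomogeneous a p,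
    hqhom ▸ homogeneousComponent_isHomogeneous b q⟩


-- append c.lean / d.lean content pieces
lemma degree_add (a b : σ →₀ ℕ) : (a + b).degree = a.degree + b.degree := by
  rw [Finsupp.degree_eq_weight_one, map_add]

lemma degree_single (i : σ) (k : ℕ) : (Finsupp.single i k).degree = k := by
  rw [Finsupp.degree_eq_weight_one, Finsupp.weight_apply, Finsupp.sum_single_index] <;> simp

lemma mem_support_degree {p : MvPolynomial σ ℂ} {n : ℕ} (hp : p.IsHomogeneous n)
    {m : σ →₀ ℕ} (hm : m ∈ p.support) : m.degree = n := by
  by_contra h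
  exact MvPolynomial.mem_support_iff.mp hm (hp.coeff_eq_zero h)

lemma pderiv_homog [DecidableEq σ] {f : MvPolynomial σ ℂ} {n : ℕ}
    (hf : f.IsHomogeneous n) (i : σ) : (pderiv i f).IsHomogeneous (n - 1) := by
  have hrw : pderiv i f = ∑ m ∈ f.support,
      monomial (m - Finsupp.single i 1) (coeff m f * m i) := by
    conv_lhs => rw [as_sum f]
    rw [map_sum]
    exact Finset.sum_congr rfl fun m _ => pderiv_monomial
  rw [hrw]
  apply MvPolynomial.IsHomogeneous.sum
  intro m hm
  by_cases h : m i = 0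
  · rw [h]
    simp only [Nat.cast_zero, mul_zero, map_zero]
    exact isHomogeneous_zero _ _ _
  · apply isHomogeneous_monomial
    have hle : Finsupp.single i 1 ≤ m := by
      rw [Finsupp.single_le_iff]
      omega
    have hadd : m - Finsupp.single i 1 + Finsupp.single i 1 = m := tsub_add_cancel_of_le hle
    have := degree_add (m - Finsupp.single i 1) (Finsupp.single i 1)
    rw [hadd, degree_single, mem_support_degree hf hm] at this
    omega

lemma euler_mono (i : σ) [DecidableEq σ] (m : σ →₀ ℕ) (a : ℂ) :
    X i * pderiv i (monomial m a) = (m i) • monomial m a := by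
  rw [pderiv_monomial]
  by_cases h : m i = 0
  · simp [h]
  · have hle : Finsupp.single i 1 ≤ m := by
      rw [Finsupp.single_le_iff]; omega
    rw [X, monomial_mul, one_mul, add_comm, tsub_add_cancel_of_le hle]
    rw [smul_monomial, nsmul_eq_mul, mul_comm]

lemma degree_fin2 (m : Fin 2 →₀ ℕ) : m.degree = m 0 + m 1 := by
  rw [Finsupp.degree_eq_sum]
  exact Fin.sum_univ_two m

lemma euler {f : MvPolynomial (Fin 2) ℂ} {n : ℕ} (hf : f.IsHomogeneous n) :
    X 0 * pderiv 0 f + X 1 * pderiv 1 f = n • f := by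
  conv_lhs => rw [as_sum f]
  rw [map_sum, map_sum, Finset.mul_sum, Finset.mul_sum, ← Finset.sum_add_distrib]
  conv_rhs => rw [as_sum f, Finset.smul_sum]
  apply Finset.sum_congr rfl
  intro m hm
  rw [euler_mono, euler_mono, ← add_smul]
  congr 1
  rw [← degree_fin2, mem_support_degree hf hm]

lemma euler' {i j : Fin 2} (hij : i ≠ j) {f : MvPolynomial (Fin 2) ℂ} {n : ℕ}
    (hf : f.IsHomogeneous n) :
    X i * pderiv i f + X j * pderiv j f = n • f := by
  match i, j, hij with
  | 0, 0, h => exact absurd rfl h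
  | 0, 1, _ => exact euler hf
  | 1, 0, _ => rw [add_comm]; exact euler hf
  | 1, 1, h => exact absurd rfl h

lemma X_dvd_iff_support {i : σ} {p : MvPolynomial σ ℂ} :
    X i ∣ p ↔ ∀ m ∈ p.support, m i ≠ 0 := by
  constructor
  · rintro ⟨s, rfl⟩ m hm
    rw [support_X_mul] at hm
    obtain ⟨m', _, rfl⟩ := Finset.mem_map.mp hm
    simp [addLeftEmbedding_apply]
  · intro h
    conv_rhs => rw [as_sum p]
    apply Finset.dvd_sum
    intro m hm
    rw [X_dvd_monomial]
    exact Or.inr (h m hm)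

lemma X_dvd_of_X_mul {i j : Fin 2} (hij : i ≠ j) {a : MvPolynomial (Fin 2) ℂ}
    (h : X i ∣ X j * a) : X i ∣ a := by
  rw [X_dvd_iff_support] at h ⊢
  intro m hm
  have hmem : Finsupp.single j 1 + m ∈ (X j * a).support := by
    rw [support_X_mul, Finset.mem_map]
    exact ⟨m, hm, addLeftEmbedding_apply _ _⟩
  have := h _ hmem
  simpa [Finsupp.single_apply, hij.symm] using this

lemma eq_zero_of_dvd_of_lt {q t : MvPolynomial σ ℂ} {e j : ℕ} (hq : q.IsHomogeneous e)
    (ht : t.IsHomogeneous j) (hj : j < e) (hd : q ∣ t) : t = 0 := by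
  obtain ⟨s, rfl⟩ := hd
  have h1 : q * s = homogeneousComponent j (q * s) := by
    rw [hc_homog ht j, if_pos rfl]
  rw [h1, hc_mul_small hq s hj]


lemma not_isUnit_X (j : Fin 2) : ¬ IsUnit (X j : MvPolynomial (Fin 2) ℂ) := by
  intro h
  have hdvd : (X j : MvPolynomial (Fin 2) ℂ) ∣ 1 := h.dvd
  have := eq_zero_of_dvd_of_lt (isHomogeneous_X ℂ j) (isHomogeneous_one (Fin 2) ℂ)
    Nat.zero_lt_one hdvd
  exact one_ne_zero this

lemma pderiv_ne_zero {d : ℕ} (hd : 2 ≤ d) {f : MvPolynomial (Fin 2) ℂ}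
    (hf : f.IsHomogeneous d) (hsf : Squarefree f) {i j : Fin 2} (hij : i ≠ j) :
    pderiv i f ≠ 0 := by
  intro h0
  have hfne : f ≠ 0 := by rintro rfl; exact not_squarefree_zero hsf
  have heuler := euler' hij hf
  rw [h0, mul_zero, zero_add] at heuler
  have hdC : ((d : ℂ)) ≠ 0 := Nat.cast_ne_zero.mpr (by omega)
  have hsmul : (d : ℂ) • f = X j * pderiv j f := by
    rw [Nat.cast_smul_eq_nsmul, heuler]
  have hf_eq : f = X j * ((d : ℂ)⁻¹ • pderiv j f) := by
    rw [mul_smul_comm, ← hsmul, smul_smul, inv_mul_cancel₀ hdC, one_smul]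
  set g := (d : ℂ)⁻¹ • pderiv j f with hg_def
  have hXg : (X j * g).IsHomogeneous d := hf_eq ▸ hf
  have hXgne : X j * g ≠ 0 := hf_eq ▸ hfne
  obtain ⟨a, b, hab, hXa, hgb⟩ := homog_factor hXg hXgne
  have ha1 : a = 1 := hXa.inj_right (isHomogeneous_X ℂ j) (X_ne_zero j)
  have hgb' : g.IsHomogeneous (d - 1) := by
    have : b = d - 1 := by omega
    exact this ▸ hgb
  -- pderiv i g = 0
  have hdig : (0 : MvPolynomial (Fin 2) ℂ) = X j * pderiv i g := by
    have h1 : pderiv i f = pderiv i (X j) * g + X j * pderiv i g := by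
      conv_lhs => rw [hf_eq]
      exact pderiv_mul
    rw [h0, pderiv_X_of_ne hij.symm, zero_mul, zero_add] at h1
    exact h1
  have hig : pderiv i g = 0 := by
    rcases mul_eq_zero.mp hdig.symm with h | h
    · exact absurd h (X_ne_zero j)
    · exact h
  -- euler on g
  have heg := euler' hij hgb'
  rw [hig, mul_zero, zero_add] at heg
  have hd1C : ((d - 1 : ℕ) : ℂ) ≠ 0 := Nat.cast_ne_zero.mpr (by omega)
  have hgXdvd : X j ∣ g := by
    refine ⟨((d - 1 : ℕ) : ℂ)⁻¹ • pderiv j g, ?_⟩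
    rw [mul_smul_comm, heg, ← Nat.cast_smul_eq_nsmul ℂ, smul_smul,
      inv_mul_cancel₀ hd1C, one_smul]
  obtain ⟨h2, hh2⟩ := hgXdvd
  have : X j * X j ∣ f := ⟨h2, by rw [hf_eq, hh2]; ring⟩
  exact not_isUnit_X j (hsf (X j) this)

lemma no_common_prime {d : ℕ} (hd : 1 ≤ d) {f : MvPolynomial (Fin 2) ℂ}
    (hf : f.IsHomogeneous d) (hsf : Squarefree f) :
    ∀ p : MvPolynomial (Fin 2) ℂ, p ∣ pderiv 0 f → p ∣ pderiv 1 f → ¬ Prime p := by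
  intro p h0 h1 hp
  have hfne : f ≠ 0 := by rintro rfl; exact not_squarefree_zero hsf
  have heuler := euler hf
  have hdC : ((d : ℂ)) ≠ 0 := Nat.cast_ne_zero.mpr (by omega)
  have hpf : p ∣ f := by
    have hdvd : p ∣ (d : ℂ) • f := by
      rw [← Nat.cast_smul_eq_nsmul ℂ] at heuler
      rw [← heuler]
      exact dvd_add (Dvd.dvd.mul_left h0 _) (Dvd.dvd.mul_left h1 _)
    have : f = C ((d : ℂ)⁻¹) * ((d : ℂ) • f) := by
      rw [smul_eq_C_mul, ← mul_assoc, ← C_mul, inv_mul_cancel₀ hdC, C_1, one_mul]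
    rw [this]
    exact Dvd.dvd.mul_left hdvd _
  obtain ⟨q, hq⟩ := hpf
  have hpqne : p * q ≠ 0 := hq ▸ hfne
  obtain ⟨jp, jq, hjpq, hpj, hqj⟩ := homog_factor (hq ▸ hf) hpqne
  have hpne : p ≠ 0 := hp.ne_zero
  have hjp1 : 1 ≤ jp := by
    by_contra hjp0
    have hjp0' : jp = 0 := by omega
    have hpC : p = C (coeff 0 p) := by
      have := hc_homog (hjp0' ▸ hpj) 0
      rw [if_pos rfl] at this
      conv_lhs => rw [← this, homogeneousComponent_zero]
    have hcne : coeff 0 p ≠ 0 := fun h => hpne (by rw [hpC, h, C_0])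
    exact hp.not_unit (hpC ▸ (isUnit_iff_ne_zero.mpr hcne).map C)
  have hnotq : ¬ p ∣ q := by
    intro hdq
    obtain ⟨r, hr⟩ := hdq
    have : p * p ∣ f := ⟨r, by rw [hq, hr]; ring⟩
    exact hp.not_unit (hsf p this)
  have hdp : ∀ i : Fin 2, p ∣ pderiv i f → pderiv i p = 0 := by
    intro i hi
    have hmul : pderiv i f = pderiv i p * q + p * pderiv i q := by
      conv_lhs => rw [hq]
      exact pderiv_mul
    have hdvd : p ∣ pderiv i p * q := by
      have : pderiv i p * q = pderiv i f - p * pderiv i q := by rw [hmul]; ring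
      rw [this]
      exact dvd_sub hi (dvd_mul_right _ _)
    rcases hp.dvd_mul.mp hdvd with h | h
    · exact eq_zero_of_dvd_of_lt hpj (pderiv_homog hpj i) (by omega) h
    · exact absurd h hnotq
  have hp0 := hdp 0 h0
  have hp1 := hdp 1 h1
  have heulerp := euler hpj
  rw [hp0, hp1, mul_zero, mul_zero, add_zero] at heulerp
  have : ((jp : ℂ)) • p = 0 := by rw [Nat.cast_smul_eq_nsmul, ← heulerp]
  rcases smul_eq_zero.mp this with h | h
  · exact (Nat.cast_ne_zero.mpr (by omega)) h
  · exact hpne h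


lemma homog_mem_span {f0 f1 g : MvPolynomial (Fin 2) ℂ} {e k : ℕ}
    (hf0 : f0.IsHomogeneous e) (hf1 : f1.IsHomogeneous e) (hg : g.IsHomogeneous k)
    (hek : e ≤ k) (hmem : g ∈ Ideal.span {f0, f1}) :
    ∃ a b : MvPolynomial (Fin 2) ℂ, a.IsHomogeneous (k - e) ∧ b.IsHomogeneous (k - e) ∧
      g = a * f0 + b * f1 := by
  obtain ⟨a, b, hab⟩ := Ideal.mem_span_pair.mp hmem
  refine ⟨homogeneousComponent (k - e) a, homogeneousComponent (k - e) b,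
    homogeneousComponent_isHomogeneous _ _, homogeneousComponent_isHomogeneous _ _, ?_⟩
  calc g = homogeneousComponent k g := by rw [hc_homog hg k, if_pos rfl]
    _ = homogeneousComponent k (a * f0) + homogeneousComponent k (b * f1) := by
        rw [← map_add, hab]
    _ = homogeneousComponent (k - e) a * f0 + homogeneousComponent (k - e) b * f1 := by
        rw [mul_comm a f0, mul_comm b f1, hc_mul' hf0 a hek, hc_mul' hf1 b hek,
          mul_comm f0 _, mul_comm f1 _]

lemma homog_mem_span_small {f0 f1 g : MvPolynomial (Fin 2) ℂ} {e k : ℕ}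
    (hf0 : f0.IsHomogeneous e) (hf1 : f1.IsHomogeneous e) (hg : g.IsHomogeneous k)
    (hek : k < e) (hmem : g ∈ Ideal.span {f0, f1}) : g = 0 := by
  obtain ⟨a, b, hab⟩ := Ideal.mem_span_pair.mp hmem
  calc g = homogeneousComponent k g := by rw [hc_homog hg k, if_pos rfl]
    _ = homogeneousComponent k (a * f0) + homogeneousComponent k (b * f1) := by
        rw [← map_add, hab]
    _ = 0 := by
        rw [mul_comm a f0, mul_comm b f1, hc_mul_small hf0 a hek, hc_mul_small hf1 b hek,
          add_zero]

lemma socle {f0 f1 : MvPolynomial (Fin 2) ℂ} {e : ℕ}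
    (hf0 : f0.IsHomogeneous e) (hf1 : f1.IsHomogeneous e) (hf1ne : f1 ≠ 0)
    (hnc : ∀ p : MvPolynomial (Fin 2) ℂ, p ∣ f1 → p ∣ f0 → ¬ Prime p)
    {g : MvPolynomial (Fin 2) ℂ} {k : ℕ} (hg : g.IsHomogeneous k) (hk : k + 3 ≤ 2 * e)
    (h0 : X 0 * g ∈ Ideal.span {f0, f1}) (h1 : X 1 * g ∈ Ideal.span {f0, f1}) :
    g ∈ Ideal.span {f0, f1} := by
  have hX0g : (X 0 * g).IsHomogeneous (k + 1) := by
    have := (isHomogeneous_X ℂ (0 : Fin 2)).mul hg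
    rwa [add_comm] at this
  have hX1g : (X 1 * g).IsHomogeneous (k + 1) := by
    have := (isHomogeneous_X ℂ (1 : Fin 2)).mul hg
    rwa [add_comm] at this
  rcases lt_or_ge (k + 1) e with hlt | hle
  · -- too low degree: X 0 * g = 0, so g = 0
    have := homog_mem_span_small hf0 hf1 hX0g hlt h0
    rcases mul_eq_zero.mp this with h | h
    · exact absurd h (X_ne_zero 0)
    · rw [h]; exact Ideal.zero_mem _
  · obtain ⟨a, b, ha, hb, hab⟩ := homog_mem_span hf0 hf1 hX0g hle h0
    obtain ⟨c, e1, hc, he1, hce⟩ := homog_mem_span hf0 hf1 hX1g hle h1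
    have key : (X 1 * a - X 0 * c) * f0 = (X 0 * e1 - X 1 * b) * f1 := by
      have h2 : X 1 * (X 0 * g) = X 0 * (X 1 * g) := by ring
      rw [hab, hce] at h2
      linear_combination h2
    have ht : (X 1 * a - X 0 * c).IsHomogeneous (k + 1 - e + 1) := by
      have h1' := (isHomogeneous_X ℂ (1 : Fin 2)).mul ha
      have h2' := (isHomogeneous_X ℂ (0 : Fin 2)).mul hc
      rw [add_comm] at h1' h2'
      exact h1'.sub h2'
    have htz : X 1 * a - X 0 * c = 0 := by
      have hdvd : f1 ∣ (X 1 * a - X 0 * c) * f0 := ⟨X 0 * e1 - X 1 * b, by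
        rw [key]; ring⟩
      have hdvd' : f1 ∣ (X 1 * a - X 0 * c) :=
        UniqueFactorizationMonoid.dvd_of_dvd_mul_left_of_no_prime_factors hf1ne hnc hdvd
      exact eq_zero_of_dvd_of_lt hf1 ht (by omega) hdvd'
    have hbz : X 0 * e1 - X 1 * b = 0 := by
      have := key
      rw [htz, zero_mul] at this
      rcases mul_eq_zero.mp this.symm with h | h
      · exact h
      · exact absurd h hf1ne
    -- extract X 0 divisibility
    have hXa : X 0 ∣ a := by
      apply X_dvd_of_X_mul (show (0 : Fin 2) ≠ 1 by decide)
      exact ⟨c, by linear_combination htz⟩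
    have hXb : X 0 ∣ b := by
      apply X_dvd_of_X_mul (show (0 : Fin 2) ≠ 1 by decide)
      exact ⟨e1, by linear_combination -hbz⟩
    obtain ⟨a1, rfl⟩ := hXa
    obtain ⟨b1, rfl⟩ := hXb
    have hcancel : g = a1 * f0 + b1 * f1 := by
      have : X 0 * g = X 0 * (a1 * f0 + b1 * f1) := by rw [hab]; ring
      exact mul_left_cancel₀ (X_ne_zero 0) this
    rw [hcancel]
    exact Ideal.add_mem _ (Ideal.mul_mem_left _ _ (Ideal.subset_span (by simp)))
      (Ideal.mul_mem_left _ _ (Ideal.subset_span (by simp)))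


lemma iterate {f0 f1 : MvPolynomial (Fin 2) ℂ} {e : ℕ} (he : 3 ≤ e)
    (hf0 : f0.IsHomogeneous e) (hf1 : f1.IsHomogeneous e) (hf1ne : f1 ≠ 0)
    (hnc : ∀ p : MvPolynomial (Fin 2) ℂ, p ∣ f1 → p ∣ f0 → ¬ Prime p) :
    ∀ n k (g : MvPolynomial (Fin 2) ℂ), g.IsHomogeneous k → g ∉ Ideal.span {f0, f1} →
      k + n ≤ 2 * e - 2 →
      ∃ w : MvPolynomial (Fin 2) ℂ, w.IsHomogeneous n ∧ w * g ∉ Ideal.span {f0, f1} := by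
  intro n
  induction n with
  | zero =>
    intro k g hg hgJ _
    exact ⟨1, isHomogeneous_one _ _, by rwa [one_mul]⟩
  | succ n ih =>
    intro k g hg hgJ hkn
    have hnot : ¬ (X 0 * g ∈ Ideal.span {f0, f1} ∧ X 1 * g ∈ Ideal.span {f0, f1}) := by
      rintro ⟨h0, h1⟩
      exact hgJ (socle hf0 hf1 hf1ne hnc hg (by omega) h0 h1)
    have hstep : ∃ i : Fin 2, X i * g ∉ Ideal.span {f0, f1} := by
      by_contra hcon
      push_neg at hcon
      exact hnot ⟨hcon 0, hcon 1⟩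
    obtain ⟨i, hi⟩ := hstep
    have hXig : (X i * g).IsHomogeneous (k + 1) := by
      have := (isHomogeneous_X ℂ i).mul hg
      rwa [add_comm] at this
    obtain ⟨w, hw, hwg⟩ := ih (k + 1) (X i * g) hXig hi (by omega)
    exact ⟨w * X i, hw.mul (isHomogeneous_X ℂ i), by rwa [mul_assoc]⟩

end Stmt7Aux

open Stmt7Aux in
theorem stmt7' (d : ℕ) (hd : 4 ≤ d) (f : MvPolynomial (Fin 2) ℂ)
    (hf : f.IsHomogeneous d) (hsf : Squarefree f) :
    (∀ u : MvPolynomial (Fin 2) ℂ, u.IsHomogeneous d → u ∉ Ideal.span {pderiv 0 f, pderiv 1 f} →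
      ∃ v : MvPolynomial (Fin 2) ℂ, v.IsHomogeneous (d - 4) ∧
        u * v ∉ Ideal.span {pderiv 0 f, pderiv 1 f}) ∧
    (∀ v : MvPolynomial (Fin 2) ℂ, v.IsHomogeneous (d - 4) → v ≠ 0 →
      ∃ u : MvPolynomial (Fin 2) ℂ, u.IsHomogeneous d ∧
        u * v ∉ Ideal.span {pderiv 0 f, pderiv 1 f}) := by
  have hf0 : (pderiv 0 f).IsHomogeneous (d - 1) := pderiv_homog hf 0
  have hf1 : (pderiv 1 f).IsHomogeneous (d - 1) := pderiv_homog hf 1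
  have hf1ne : pderiv 1 f ≠ 0 :=
    pderiv_ne_zero (by omega) hf hsf (show (1 : Fin 2) ≠ 0 by decide)
  have hnc : ∀ p : MvPolynomial (Fin 2) ℂ, p ∣ pderiv 1 f → p ∣ pderiv 0 f → ¬ Prime p :=
    fun p h1 h0 => no_common_prime (by omega) hf hsf p h0 h1
  have he3 : 3 ≤ d - 1 := by omega
  constructor
  · intro u hu huJ
    obtain ⟨w, hw, hwu⟩ := iterate he3 hf0 hf1 hf1ne hnc (d - 4) d u hu huJ (by omega)
    exact ⟨w, hw, by rwa [mul_comm]⟩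
  · intro v hv hvne
    have hvJ : v ∉ Ideal.span {pderiv 0 f, pderiv 1 f} := by
      intro hmem
      exact hvne (homog_mem_span_small hf0 hf1 hv (by omega) hmem)
    obtain ⟨w, hw, hwv⟩ := iterate he3 hf0 hf1 hf1ne hnc d (d - 4) v hv hvJ (by omega)
    exact ⟨w, hw, hwv⟩

/-- If `f ∈ ℂ[X₀,X₁]` is homogeneous of degree `d ≥ 4` and squarefree, then the multiplication
pairing `R_f^d × R_f^{d−4} → R_f^{2d−4}` is perfect: (a) for every `u ∈ S^d` with `u ∉ J_f`
there is `v ∈ S^{d−4}` with `u·v ∉ J_f`, and (b) for every nonzero `v ∈ S^{d−4}` there is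
`u ∈ S^d` with `u·v ∉ J_f`. -/
theorem stmt7 (d : ℕ) (hd : 4 ≤ d) (f : MvPolynomial (Fin 2) ℂ)
    (hf : f.IsHomogeneous d) (hsf : Squarefree f) :
    (∀ u : MvPolynomial (Fin 2) ℂ, u.IsHomogeneous d → u ∉ jacIdeal f →
      ∃ v : MvPolynomial (Fin 2) ℂ, v.IsHomogeneous (d - 4) ∧ u * v ∉ jacIdeal f) ∧
    (∀ v : MvPolynomial (Fin 2) ℂ, v.IsHomogeneous (d - 4) → v ≠ 0 →
      ∃ u : MvPolynomial (Fin 2) ℂ, u.IsHomogeneous d ∧ u * v ∉ jacIdeal f) := by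
  exact stmt7' d hd f hf hsf
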